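/- arXiv:2012.10070 — 2 statements merged into one kernel-verified Lean document; each statement's English description precedes it below -/
import Mathlib

section
/- Let k be a positive integer and let i be the unique non-negative integer with 2^i + i ≤ k ≤ 2^{i+1} + i. Then m(T_k) = k − i. -/
open SimpleGraph

/-- A proper coloring by natural number colors. -/
def IsProperNat {V : Type*} (G : SimpleGraph V) (c : V → ℕ) : Prop :=
  ∀ ⦃v w⦄, G.Adj v w → c v ≠ c w

/-- A Grundy coloring of `G` with colors `1, …, k`: proper, every color used, and
every vertex of color `j` has a neighbor of each color `i < j`. -/
def IsGrundyColoring {V : Type*} (G : SimpleGraph V) (k : ℕ) (c : V → ℕ) : Prop :=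
  (∀ v, c v ∈ Finset.Icc 1 k) ∧ IsProperNat G c ∧
  (∀ i ∈ Finset.Icc 1 k, ∃ v, c v = i) ∧
  (∀ v, ∀ i, 1 ≤ i → i < c v → ∃ w, G.Adj v w ∧ c w = i)

/-- The Grundy number: the maximum number of colors in a Grundy coloring. -/
noncomputable def grundyNumber {V : Type*} (G : SimpleGraph V) : ℕ :=
  sSup {k | ∃ c : V → ℕ, IsGrundyColoring G k c}

/-- A color-dominating (b-)coloring with colors `1, …, k`: proper, and each color class
contains a vertex having neighbors in all the other color classes. -/
def IsBColoring {V : Type*} (G : SimpleGraph V) (k : ℕ) (c : V → ℕ) : Prop :=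
  (∀ v, c v ∈ Finset.Icc 1 k) ∧ IsProperNat G c ∧
  (∀ i ∈ Finset.Icc 1 k, ∃ v, c v = i ∧
    ∀ j ∈ Finset.Icc 1 k, j ≠ i → ∃ w, G.Adj v w ∧ c w = j)

/-- The b-chromatic number: the maximum number of colors in a b-coloring. -/
noncomputable def bChromatic {V : Type*} (G : SimpleGraph V) : ℕ :=
  sSup {k | ∃ c : V → ℕ, IsBColoring G k c}

/-- `m(G) = max {k : d_k ≥ k - 1}` for the non-increasing degree sequence; equivalently
the largest `k` such that `G` has `k` vertices of degree at least `k - 1`. -/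
noncomputable def mParam {V : Type*} (G : SimpleGraph V) : ℕ :=
  sSup {k | ∃ s : Finset V, s.card = k ∧ ∀ v ∈ s, k - 1 ≤ (G.neighborSet v).ncard}

/-- A graph is b-monotone if the b-chromatic number of every induced subgraph is at most
that of the graph itself. -/
def BMonotone {V : Type*} (G : SimpleGraph V) : Prop :=
  ∀ s : Set V, bChromatic (G.induce s) ≤ bChromatic G

/-- Vertex type of the tree atoms: `atomV n` has `2^n` vertices; `T_k` lives on `atomV (k-1)`. -/
def atomV : ℕ → Type
  | 0 => Unit
  | n + 1 => atomV n ⊕ atomV n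

instance atomV.fintype : ∀ n, Fintype (atomV n)
  | 0 => inferInstanceAs (Fintype Unit)
  | n + 1 => by
    have := atomV.fintype n
    exact inferInstanceAs (Fintype (atomV n ⊕ atomV n))

/-- Adjacency of the tree atom: `T_{k+1}` is `T_k` together with a new leaf attached to
every vertex of `T_k`. -/
def atomAdj : (n : ℕ) → atomV n → atomV n → Prop
  | 0, _, _ => False
  | n + 1, Sum.inl a, Sum.inl b => atomAdj n a b
  | _ + 1, Sum.inl a, Sum.inr b => a = b
  | _ + 1, Sum.inr a, Sum.inl b => a = b
  | _ + 1, Sum.inr _, Sum.inr _ => False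

theorem atomAdj_symm : ∀ n (a b : atomV n), atomAdj n a b → atomAdj n b a
  | 0, _, _, h => h.elim
  | n + 1, Sum.inl a, Sum.inl b, h => atomAdj_symm n a b h
  | _ + 1, Sum.inl _, Sum.inr _, h => h.symm
  | _ + 1, Sum.inr _, Sum.inl _, h => h.symm
  | _ + 1, Sum.inr _, Sum.inr _, h => h.elim

theorem atomAdj_irrefl : ∀ n (a : atomV n), ¬ atomAdj n a a
  | 0, _, h => h.elim
  | n + 1, Sum.inl a, h => atomAdj_irrefl n a h
  | _ + 1, Sum.inr _, h => h.elim

def atomGraph (n : ℕ) : SimpleGraph (atomV n) where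
  Adj := atomAdj n
  symm := ⟨by intro a b h; exact atomAdj_symm n a b h⟩
  loopless := ⟨by intro a h; exact atomAdj_irrefl n a h⟩

/-- The tree atom `T_k` (for `k ≥ 1`), on `2^(k-1)` vertices. -/
def treeAtom (k : ℕ) : SimpleGraph (atomV (k - 1)) := atomGraph (k - 1)

-- degree function
def natDeg : (n : ℕ) → atomV n → ℕ
  | 0, _ => 0
  | n + 1, Sum.inl a => natDeg n a + 1
  | _ + 1, Sum.inr _ => 1

instance atomV.finite (n : ℕ) : Finite (atomV n) := Finite.of_fintype _

theorem ncard_neighborSet : ∀ n (v : atomV n),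
    ((atomGraph n).neighborSet v).ncard = natDeg n v
  | 0, v => by
    have : (atomGraph 0).neighborSet v = ∅ := by
      ext w; exact iff_of_false (fun h => h) (fun h => h)
    rw [this]; simp [natDeg]
  | n + 1, Sum.inl a => by
    have hset : (atomGraph (n+1)).neighborSet (Sum.inl a)
        = Sum.inl '' ((atomGraph n).neighborSet a) ∪ {Sum.inr a} := by
      ext w
      cases w with
      | inl b =>
        show atomAdj (n+1) (Sum.inl a) (Sum.inl b) ↔ (∃ x, x ∈ (atomGraph n).neighborSet a ∧
          (Sum.inl x : atomV n ⊕ atomV n) = Sum.inl b) ∨ (Sum.inl b : atomV n ⊕ atomV n) = Sum.inr a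
        constructor
        · intro h; exact Or.inl ⟨b, h, rfl⟩
        · rintro (⟨c, hc, hcb⟩ | h)
          · cases hcb; exact hc
          · exact absurd h (by simp)
      | inr b =>
        show atomAdj (n+1) (Sum.inl a) (Sum.inr b) ↔ (∃ x, x ∈ (atomGraph n).neighborSet a ∧
          (Sum.inl x : atomV n ⊕ atomV n) = Sum.inr b) ∨ (Sum.inr b : atomV n ⊕ atomV n) = Sum.inr a
        constructor
        · intro h; exact Or.inr (by cases h; rfl)
        · rintro (⟨c, _, hcb⟩ | h)
          · exact absurd hcb (by simp)
          · cases h; exact rfl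
    have hdisj : Disjoint (Sum.inl '' ((atomGraph n).neighborSet a))
        ({Sum.inr a} : Set (atomV n ⊕ atomV n)) := by
      rw [Set.disjoint_singleton_right]
      rintro ⟨c, _, hc⟩
      exact absurd hc (by simp)
    have e := Set.ncard_union_eq hdisj (Set.toFinite _) (Set.toFinite _)
    rw [Set.ncard_image_of_injective _ Sum.inl_injective,
      Set.ncard_singleton, ncard_neighborSet n a] at e
    rw [hset]
    exact e
  | n + 1, Sum.inr a => by
    have hset : (atomGraph (n+1)).neighborSet (Sum.inr a) = {Sum.inl a} := by
      ext w
      cases w with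
      | inl b =>
        show a = b ↔ (Sum.inl b : atomV n ⊕ atomV n) = Sum.inl a
        constructor
        · intro h; cases h; rfl
        · intro h; cases (Sum.inl_injective h : b = a); exact rfl
      | inr b =>
        exact iff_of_false (fun h => h)
          (fun h => Sum.inr_ne_inl (show (Sum.inr b : atomV n ⊕ atomV n) = Sum.inl a from h))
    rw [hset]; exact Set.ncard_singleton (Sum.inl a : atomV n ⊕ atomV n)

theorem card_atomV : ∀ n, Fintype.card (atomV n) = 2 ^ n
  | 0 => rfl
  | n + 1 => by
    have : Fintype.card (atomV (n+1)) = Fintype.card (atomV n ⊕ atomV n) := rfl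
    rw [this, Fintype.card_sum, card_atomV n]
    ring

/-- number of vertices of `atomGraph n` of degree at least `d` -/
def atomCount (n d : ℕ) : ℕ :=
  (Finset.univ.filter (fun v : atomV n => d ≤ natDeg n v)).card

theorem filter_sum_card {α β : Type*} [Fintype α] [Fintype β]
    (p : α ⊕ β → Prop) [DecidablePred p] :
    (Finset.univ.filter p).card
      = (Finset.univ.filter (fun a => p (Sum.inl a))).card
        + (Finset.univ.filter (fun b => p (Sum.inr b))).card := by
  classical
  have hl : (Finset.univ.filter p).toLeft = Finset.univ.filter (fun a => p (Sum.inl a)) := by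
    ext a; simp
  have hr : (Finset.univ.filter p).toRight = Finset.univ.filter (fun b => p (Sum.inr b)) := by
    ext b; simp
  rw [← hl, ← hr, Finset.card_toLeft_add_card_toRight]

theorem atomCount_succ (n d : ℕ) :
    atomCount (n + 1) d = atomCount n (d - 1) + (if d ≤ 1 then 2 ^ n else 0) := by
  classical
  have h0 : atomCount (n + 1) d
      = (Finset.univ.filter (fun v : atomV n ⊕ atomV n => d ≤ natDeg (n+1) v)).card := by
    exact congrArg Finset.card
      (Finset.filter_congr_decidable _ _ (fun _ => Classical.propDecidable _)).symm
  rw [h0, filter_sum_card]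
  congr 1
  · have : (Finset.univ.filter (fun a : atomV n => d ≤ natDeg (n+1) (Sum.inl a)))
        = Finset.univ.filter (fun a : atomV n => d - 1 ≤ natDeg n a) := by
      apply Finset.filter_congr
      intro a _
      show d ≤ natDeg n a + 1 ↔ d - 1 ≤ natDeg n a
      omega
    refine (congrArg Finset.card (Finset.filter_congr_decidable _ _ _)).trans
      ((congrArg Finset.card this).trans ?_)
    unfold atomCount
    congr
  · by_cases hd : d ≤ 1
    · rw [if_pos hd]
      have : (Finset.univ.filter (fun b : atomV n => d ≤ natDeg (n+1) (Sum.inr b)))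
          = Finset.univ := by
        apply Finset.filter_true_of_mem
        intro b _; exact hd
      exact (congrArg Finset.card (Finset.filter_congr_decidable _ _ _)).trans
        ((congrArg Finset.card this).trans (Finset.card_univ.trans (card_atomV n)))
    · rw [if_neg hd]
      have : (Finset.univ.filter (fun b : atomV n => d ≤ natDeg (n+1) (Sum.inr b)))
          = ∅ := by
        apply Finset.filter_false_of_mem
        intro b _; exact hd
      exact (congrArg Finset.card (Finset.filter_congr_decidable _ _ _)).trans
        ((congrArg Finset.card this).trans Finset.card_empty)

theorem atomCount_zero (n : ℕ) : atomCount n 0 = 2 ^ n := by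
  unfold atomCount
  rw [Finset.filter_true_of_mem (fun v _ => Nat.zero_le _), Finset.card_univ, card_atomV]

theorem atomCount_gt : ∀ n d, n < d → atomCount n d = 0
  | 0, d, h => by
    unfold atomCount
    rw [Finset.filter_false_of_mem, Finset.card_empty]
    intro v _
    show ¬ d ≤ 0
    omega
  | n + 1, d, h => by
    rw [atomCount_succ, atomCount_gt n (d-1) (by omega), if_neg (by omega)]

theorem atomCount_eq : ∀ n d, 1 ≤ d → d ≤ n → atomCount n d = 2 ^ (n - d + 1)
  | 0, d, h1, h2 => by omega
  | n + 1, d, h1, h2 => by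
    rw [atomCount_succ]
    rcases Nat.lt_or_ge d 2 with hd | hd
    · have hd1 : d = 1 := by omega
      subst hd1
      rw [if_pos (le_refl 1), atomCount_zero]
      have : n + 1 - 1 + 1 = n + 1 := by omega
      rw [this]
      ring
    · rw [if_neg (by omega), atomCount_eq n (d-1) (by omega) (by omega)]
      rw [show n - (d - 1) + 1 = n + 1 - d + 1 from by omega]
      omega

theorem atomCount_anti (n : ℕ) {d d' : ℕ} (h : d ≤ d') : atomCount n d' ≤ atomCount n d := by
  apply Finset.card_le_card
  intro v hv
  rw [Finset.mem_filter] at hv ⊢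
  exact ⟨hv.1, le_trans h hv.2⟩


/-- If `2^i + i ≤ k ≤ 2^(i+1) + i` then `m(T_k) = k - i`. -/
theorem mParam_treeAtom (k i : ℕ) (h1 : 2 ^ i + i ≤ k) (h2 : k ≤ 2 ^ (i + 1) + i) :
    mParam (treeAtom k) = k - i := by
  have h2i : 1 ≤ 2 ^ i := Nat.one_le_two_pow
  have h2i1 : 1 ≤ 2 ^ (i + 1) := Nat.one_le_two_pow
  have hk1 : 1 ≤ k := by omega
  set n := k - 1 with hn
  have hkn : k = n + 1 := by omega
  have hni : i ≤ n := by omega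
  have hdeg : ∀ v : atomV (k - 1), ((treeAtom k).neighborSet v).ncard = natDeg (k - 1) v :=
    fun v => ncard_neighborSet (k - 1) v
  -- the set whose sSup is mParam
  set S : Set ℕ := {j | ∃ s : Finset (atomV (k - 1)), s.card = j ∧
      ∀ v ∈ s, j - 1 ≤ ((treeAtom k).neighborSet v).ncard} with hS
  have hmem : (k - i) ∈ S := by
    have hLB : k - i ≤ atomCount n (k - i - 1) := by
      rcases Nat.eq_zero_or_pos (k - i - 1) with h0 | hpos
      · rw [h0, atomCount_zero]
        -- here n = i, need 2^n ≥ k - i = n + 1 - i... k - i ≤ 1 anyway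
        have : k - i ≤ 1 := by omega
        have h2n : 1 ≤ 2 ^ n := Nat.one_le_two_pow
        omega
      · have hle : k - i - 1 ≤ n := by omega
        rw [atomCount_eq n (k - i - 1) hpos hle]
        have : n - (k - i - 1) + 1 = i + 1 := by omega
        rw [this]
        omega
    obtain ⟨t, hts, htc⟩ := Finset.exists_subset_card_eq hLB
    refine ⟨t, htc, fun v hv => ?_⟩
    have := hts hv
    rw [Finset.mem_filter] at this
    rw [hdeg v]
    exact this.2
  have hub : ∀ j ∈ S, j ≤ k - i := by
    rintro j ⟨s, hsc, hsd⟩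
    by_contra hj
    push_neg at hj
    have hsub : s ⊆ Finset.univ.filter (fun v : atomV n => j - 1 ≤ natDeg n v) := by
      intro v hv
      rw [Finset.mem_filter]
      exact ⟨Finset.mem_univ v, by rw [← hdeg v]; exact hsd v hv⟩
    have hcard : j ≤ atomCount n (j - 1) := by
      have := Finset.card_le_card hsub
      rw [hsc] at this
      exact this
    have hmono : atomCount n (j - 1) ≤ atomCount n (k - i) :=
      atomCount_anti n (by omega)
    rcases Nat.eq_zero_or_pos i with hi0 | hip
    · subst hi0
      rw [atomCount_gt n (k - 0) (by omega)] at hmono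
      omega
    · rw [atomCount_eq n (k - i) (by omega) (by omega),
        show n - (k - i) + 1 = i from by omega] at hmono
      omega
  exact le_antisymm (csSup_le ⟨k - i, hmem⟩ hub) (le_csSup ⟨k - i, hub⟩ hmem)
end

section
/- For any positive integer k ≥ 2, k − ⌊log₂(k−1)⌋ ≤ b(T_k) ≤ k − ⌊log₂ k⌋ + 1, where T_k is the k-th tree atom. -/
open SimpleGraph

/-! Stage 1 -/
def clr (x : ℕ) : ℕ := x - 2 ^ Nat.log 2 x

lemma clr_zero : clr 0 = 0 := by simp [clr]

lemma clr_le (x : ℕ) : clr x ≤ x := Nat.sub_le _ _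

lemma clr_lt {x : ℕ} (hx : x ≠ 0) : clr x < x :=
  Nat.sub_lt (Nat.pos_of_ne_zero hx) (Nat.pow_pos (by norm_num))

lemma clr_add_eq {x : ℕ} (hx : x ≠ 0) : clr x + 2 ^ Nat.log 2 x = x :=
  Nat.sub_add_cancel (Nat.pow_log_le_self 2 hx)

lemma clr_lt_pow {x : ℕ} (hx : x ≠ 0) : clr x < 2 ^ Nat.log 2 x := by
  have h := Nat.lt_pow_succ_log_self (b := 2) (by norm_num) x
  have := Nat.pow_log_le_self 2 hx
  unfold clr
  omega

lemma log_add_pow {v p : ℕ} (h : v < 2 ^ p) : Nat.log 2 (v + 2 ^ p) = p :=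
  Nat.log_eq_of_pow_le_of_lt_pow (by omega) (by rw [pow_succ]; omega)

lemma clr_add_pow {v p : ℕ} (h : v < 2 ^ p) : clr (v + 2 ^ p) = v := by
  unfold clr; rw [log_add_pow h]; omega

/-- Nat-level adjacency of the binomial tree: `x` is the parent of `y` or vice versa. -/
def natAdj (x y : ℕ) : Prop := (y ≠ 0 ∧ x = clr y) ∨ (x ≠ 0 ∧ y = clr x)

lemma natAdj_comm {x y : ℕ} : natAdj x y ↔ natAdj y x := or_comm

def toNatV : (n : ℕ) → atomV n → ℕ
  | 0, _ => 0
  | n+1, Sum.inl a => toNatV n a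
  | n+1, Sum.inr a => toNatV n a + 2 ^ n

lemma toNatV_lt : ∀ n (a : atomV n), toNatV n a < 2 ^ n
  | 0, _ => by simp [toNatV]
  | n+1, Sum.inl a => lt_of_lt_of_le (toNatV_lt n a) (by rw [pow_succ]; omega)
  | n+1, Sum.inr a => by have := toNatV_lt n a; rw [pow_succ]; simp [toNatV]; omega

lemma toNatV_inj : ∀ n (a b : atomV n), toNatV n a = toNatV n b → a = b
  | 0, a, b, _ => rfl
  | n+1, Sum.inl a, Sum.inl b, h => by rw [toNatV_inj n a b h]
  | n+1, Sum.inl a, Sum.inr b, h => by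
      have := toNatV_lt n a; simp only [toNatV] at h; omega
  | n+1, Sum.inr a, Sum.inl b, h => by
      have := toNatV_lt n b; simp only [toNatV] at h; omega
  | n+1, Sum.inr a, Sum.inr b, h => by
      simp only [toNatV] at h
      rw [toNatV_inj n a b (by omega)]

def ofNatV : (n : ℕ) → ℕ → atomV n
  | 0, _ => ()
  | n+1, x => if x < 2 ^ n then Sum.inl (ofNatV n x) else Sum.inr (ofNatV n (x - 2 ^ n))

lemma toNatV_ofNatV : ∀ n x, x < 2 ^ n → toNatV n (ofNatV n x) = x
  | 0, x, h => by interval_cases x <;> rfl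
  | n+1, x, h => by
      rw [ofNatV]
      by_cases hx : x < 2 ^ n
      · simp only [hx, ↓reduceIte]; exact toNatV_ofNatV n x ‹_›
      · simp only [hx, ↓reduceIte]; rw [pow_succ] at h
        simp only [toNatV]
        rw [toNatV_ofNatV n (x - 2^n) (by omega)]
        omega

lemma natAdj_shift {x y n : ℕ} (hx : x < 2 ^ n) (hy : y < 2 ^ n) :
    natAdj x (y + 2 ^ n) ↔ x = y := by
  constructor
  · rintro (⟨-, h⟩ | ⟨hx0, h⟩)
    · rwa [clr_add_pow hy] at h
    · have := clr_lt hx0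
      omega
  · rintro rfl
    exact Or.inl ⟨by positivity, (clr_add_pow hy).symm⟩

lemma not_natAdj_shift {x y n : ℕ} (hx : x < 2 ^ n) (hy : y < 2 ^ n) :
    ¬ natAdj (x + 2 ^ n) (y + 2 ^ n) := by
  rintro (⟨-, h⟩ | ⟨-, h⟩)
  · rw [clr_add_pow hy] at h; omega
  · rw [clr_add_pow hx] at h; omega

theorem atom_adj_iff : ∀ n (a b : atomV n),
    (atomGraph n).Adj a b ↔ natAdj (toNatV n a) (toNatV n b)
  | 0, a, b => by
      simp only [atomGraph, natAdj, toNatV]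
      exact ⟨fun h => h.elim, by simp [clr_zero]⟩
  | n+1, Sum.inl a, Sum.inl b => atom_adj_iff n a b
  | n+1, Sum.inl a, Sum.inr b => by
      show (a = b) ↔ _
      rw [show toNatV (n+1) (Sum.inl a) = toNatV n a from rfl,
        show toNatV (n+1) (Sum.inr b) = toNatV n b + 2^n from rfl,
        natAdj_shift (toNatV_lt n a) (toNatV_lt n b)]
      exact ⟨fun h => by rw [h], toNatV_inj n a b⟩
  | n+1, Sum.inr a, Sum.inl b => by
      show (a = b) ↔ _
      rw [natAdj_comm]
      rw [show toNatV (n+1) (Sum.inr a) = toNatV n a + 2^n from rfl,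
        show toNatV (n+1) (Sum.inl b) = toNatV n b from rfl,
        natAdj_shift (toNatV_lt n b) (toNatV_lt n a)]
      exact ⟨fun h => by rw [h], fun h => (toNatV_inj n b a h).symm⟩
  | n+1, Sum.inr a, Sum.inr b => by
      show False ↔ _
      simp only [false_iff]
      exact not_natAdj_shift (toNatV_lt n a) (toNatV_lt n b)
/-! Stage 2: counting -/

/-- Colors (minus one) that b-vertex `v` still needs from its "free" children. -/
def Sset (m v : ℕ) : Finset ℕ :=
  (Finset.range m).filter fun s => s ≠ v ∧ s ≠ clr v ∧ clr s ≠ v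

/-- Positions of "free" children of `v` (children that are ≥ m). -/
def FreeSet (n m v : ℕ) : Finset ℕ :=
  (Finset.range n).filter fun p => v < 2 ^ p ∧ m ≤ v + 2 ^ p

lemma card_Sset_le {n m v : ℕ} (h2 : 2 ≤ m) (hmn : m ≤ n + 1)
    (hlog : ∀ w, 1 ≤ w → w < m → Nat.log 2 w + m ≤ n + 1) (hv : v < m) :
    (Sset m v).card ≤ (FreeSet n m v).card := by
  classical
  set sv : ℕ := if v = 0 then 0 else Nat.log 2 v + 1 with hsv
  -- all child positions
  set A : Finset ℕ := (Finset.range n).filter (fun p => v < 2 ^ p) with hA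
  have hAIco : A = Finset.Ico sv n := by
    ext p
    simp only [hA, Finset.mem_filter, Finset.mem_range, Finset.mem_Ico]
    constructor
    · rintro ⟨hpn, hvp⟩
      refine ⟨?_, hpn⟩
      rcases Nat.eq_zero_or_pos v with rfl | hv1
      · simp [hsv]
      · have hlt : Nat.log 2 v < p := Nat.log_lt_of_lt_pow (by omega) hvp
        have hvne : v ≠ 0 := by omega
        simp only [hsv, if_neg hvne]
        omega
    · rintro ⟨hsp, hpn⟩
      refine ⟨hpn, ?_⟩
      rcases Nat.eq_zero_or_pos v with rfl | hv1
      · positivity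
      · have hvne : v ≠ 0 := by omega
        simp only [hsv, if_neg hvne] at hsp
        calc v < 2 ^ (Nat.log 2 v + 1) := Nat.lt_pow_succ_log_self (by norm_num) v
        _ ≤ 2 ^ p := Nat.pow_le_pow_right (by norm_num) hsp
  have hsvn : sv ≤ n := by
    rcases Nat.eq_zero_or_pos v with rfl | hv1
    · simp [hsv]
    · have := hlog v hv1 hv
      have hvne : v ≠ 0 := by omega
      simp only [hsv, if_neg hvne]
      omega
  have hcardA : A.card = n - sv := by rw [hAIco, Nat.card_Ico]
  -- small-children positions
  set D : Finset ℕ := A.filter (fun p => v + 2 ^ p < m) with hD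
  have hFA : FreeSet n m v = A.filter (fun p => ¬ v + 2 ^ p < m) := by
    ext p
    simp only [FreeSet, hA, Finset.mem_filter, Finset.mem_range]
    omega
  have hsplit : (FreeSet n m v).card + D.card = A.card := by
    rw [hFA, hD]
    have h := Finset.card_filter_add_card_filter_not
      (s := A) (p := fun p => v + 2 ^ p < m)
    omega
  -- the bad set
  set Bad : Finset ℕ :=
    (Finset.range m).filter (fun s => ¬(s ≠ v ∧ s ≠ clr v ∧ clr s ≠ v)) with hBad
  have hsplit2 : (Sset m v).card + Bad.card = m := by
    have h := Finset.card_filter_add_card_filter_not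
      (s := Finset.range m) (p := fun s => s ≠ v ∧ s ≠ clr v ∧ clr s ≠ v)
    rw [Finset.card_range] at h
    exact h
  -- lower bound for Bad
  set e : ℕ := if v = 0 then 0 else 1 with he
  have hT : (1 + e) + D.card ≤ Bad.card := by
    set img : Finset ℕ := D.image (fun p => v + 2 ^ p) with himg
    have himgcard : img.card = D.card := by
      rw [himg]
      apply Finset.card_image_of_injOn
      intro p hp q hq hpq
      simp only [Finset.mem_coe] at hp hq
      dsimp only at hpq
      have hp2 : v < 2 ^ p := (Finset.mem_filter.mp (Finset.mem_filter.mp hp).1).2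
      have hq2 : v < 2 ^ q := (Finset.mem_filter.mp (Finset.mem_filter.mp hq).1).2
      have : (2:ℕ) ^ p = 2 ^ q := by omega
      exact Nat.pow_right_injective (by norm_num) this
    set T : Finset ℕ := insert v ((if v = 0 then (∅ : Finset ℕ) else {clr v}) ∪ img) with hTdef
    have hTsub : T ⊆ Bad := by
      intro s hs
      rw [hTdef] at hs
      rcases Finset.mem_insert.mp hs with rfl | hs
      · simp [hBad, Finset.mem_filter, hv]
      · rcases Finset.mem_union.mp hs with hs | hs
        · split at hs
          · exact absurd hs (Finset.notMem_empty _)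
          · have hs' := Finset.mem_singleton.mp hs
            subst hs'
            have : clr v < v := clr_lt ‹v ≠ 0›
            simp [hBad, Finset.mem_filter]
            omega
        · rw [himg] at hs
          obtain ⟨p, hp, rfl⟩ := Finset.mem_image.mp hs
          have hp1 := Finset.mem_filter.mp hp
          have hp2 := Finset.mem_filter.mp hp1.1
          simp only [hBad, Finset.mem_filter, Finset.mem_range]
          exact ⟨hp1.2, by simp [clr_add_pow hp2.2]⟩
    have hTcard : T.card = 1 + e + D.card := by
      rw [hTdef]
      have hni : v ∉ ((if v = 0 then (∅ : Finset ℕ) else {clr v}) ∪ img) := by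
        intro hmem
        rcases Finset.mem_union.mp hmem with hs | hs
        · split at hs
          · exact absurd hs (Finset.notMem_empty _)
          · have := clr_lt ‹v ≠ 0›
            have := Finset.mem_singleton.mp hs
            omega
        · obtain ⟨p, hp, hpe⟩ := Finset.mem_image.mp hs
          have hp2 := Finset.mem_filter.mp (Finset.mem_filter.mp hp).1
          have : (0:ℕ) < 2 ^ p := by positivity
          omega
      rw [Finset.card_insert_of_notMem hni]
      have hdisj : Disjoint (if v = 0 then (∅ : Finset ℕ) else {clr v}) img := by
        split
        · exact Finset.disjoint_empty_left _
        · rw [Finset.disjoint_singleton_left]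
          intro hmem
          obtain ⟨p, hp, hpe⟩ := Finset.mem_image.mp hmem
          have hp2 := Finset.mem_filter.mp (Finset.mem_filter.mp hp).1
          have h1 : clr v < v := clr_lt ‹v ≠ 0›
          have : (0:ℕ) < 2 ^ p := by positivity
          omega
      rw [Finset.card_union_of_disjoint hdisj, himgcard]
      have : (if v = 0 then (∅ : Finset ℕ) else ({clr v} : Finset ℕ)).card = e := by
        rw [he]; split <;> simp
      omega
    calc 1 + e + D.card = T.card := hTcard.symm
    _ ≤ Bad.card := Finset.card_le_card hTsub
  -- final arithmetic
  have hms : m + sv ≤ n + 1 + e := by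
    rcases Nat.eq_zero_or_pos v with rfl | hv1
    · simp [hsv, he]; omega
    · have hvne : v ≠ 0 := by omega
      simp only [hsv, he, if_neg hvne]
      have := hlog v hv1 hv
      omega
  omega

/-- An injection from `Sset` into `FreeSet`, as a total function. -/
lemma exists_inj_SF {n m v : ℕ} (h : (Sset m v).card ≤ (FreeSet n m v).card) :
    ∃ g : ℕ → ℕ, Set.InjOn g (Sset m v) ∧ ∀ s ∈ Sset m v, g s ∈ FreeSet n m v := by
  classical
  set S := Sset m v
  set F := FreeSet n m v
  refine ⟨fun s => if hs : s ∈ S then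
      F.orderEmbOfCardLe h ((S.orderIsoOfFin rfl).symm ⟨s, hs⟩) else 0, ?_, ?_⟩
  · intro a ha b hb hab
    simp only [Finset.mem_coe] at ha hb
    dsimp only at hab
    rw [dif_pos ha, dif_pos hb] at hab
    have h1 := (F.orderEmbOfCardLe h).injective hab
    have h2 := (S.orderIsoOfFin rfl).symm.injective h1
    exact congrArg Subtype.val h2
  · intro s hs
    dsimp only
    rw [dif_pos hs]
    exact F.orderEmbOfCardLe_mem h _
/-! Stage 3: the coloring -/

/-- The element of `Sset m v` that `f v` sends to `p`, if any. -/
noncomputable def pick (m : ℕ) (f : ℕ → ℕ → ℕ) (v p : ℕ) : ℕ :=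
  if h : ∃ s ∈ Sset m v, f v s = p then h.choose else 0

lemma pick_mem {m v p : ℕ} {f : ℕ → ℕ → ℕ} (h : ∃ s ∈ Sset m v, f v s = p) :
    pick m f v p ∈ Sset m v := by
  unfold pick
  rw [dif_pos h]
  exact h.choose_spec.1

lemma pick_spec {m v p : ℕ} {f : ℕ → ℕ → ℕ} (hinj : Set.InjOn (f v) (Sset m v))
    {s : ℕ} (hs : s ∈ Sset m v) (hfp : f v s = p) : pick m f v p = s := by
  have hex : ∃ s' ∈ Sset m v, f v s' = p := ⟨s, hs, hfp⟩
  unfold pick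
  rw [dif_pos hex]
  exact hinj hex.choose_spec.1 hs (hex.choose_spec.2.trans hfp.symm)

open Classical in
noncomputable def colF (m : ℕ) (f : ℕ → ℕ → ℕ) (w : ℕ) : ℕ :=
  if w < m then w + 1
  else if h1 : w = 0 then 1
  else if clr w < m then
    (if ∃ s ∈ Sset m (clr w), f (clr w) s = Nat.log 2 w then
      pick m f (clr w) (Nat.log 2 w) + 1
     else if clr w = 0 then 2 else 1)
  else if colF m f (clr w) = 1 then 2 else 1
termination_by w
decreasing_by exact clr_lt h1

lemma colF_lt {m f w} (h : w < m) : colF m f w = w + 1 := by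
  rw [colF.eq_def, if_pos h]

lemma colF_ge {m : ℕ} (f : ℕ → ℕ → ℕ) {w : ℕ} (hm : ¬ w < m) (hw : w ≠ 0) :
    colF m f w =
      if clr w < m then
        (if ∃ s ∈ Sset m (clr w), f (clr w) s = Nat.log 2 w then
          pick m f (clr w) (Nat.log 2 w) + 1
         else if clr w = 0 then 2 else 1)
      else if colF m f (clr w) = 1 then 2 else 1 := by
  conv_lhs => rw [colF.eq_def]
  rw [if_neg hm, dif_neg hw]

lemma colF_mem {m : ℕ} (f : ℕ → ℕ → ℕ) (h2 : 2 ≤ m) (w : ℕ) :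
    colF m f w ∈ Finset.Icc 1 m := by
  induction w using Nat.strong_induction_on with
  | _ w ih =>
    rw [colF.eq_def]
    split
    · simp only [Finset.mem_Icc]; omega
    · split
      · simp only [Finset.mem_Icc]; omega
      · split
        · split
          · rename_i hex
            have := pick_mem hex
            simp only [Sset, Finset.mem_filter, Finset.mem_range] at this
            simp only [Finset.mem_Icc]; omega
          · split <;> (simp only [Finset.mem_Icc]; omega)
        · split <;> (simp only [Finset.mem_Icc]; omega)

lemma colF_proper {m : ℕ} (f : ℕ → ℕ → ℕ) (h2 : 2 ≤ m) {w : ℕ} (hw : w ≠ 0) :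
    colF m f (clr w) ≠ colF m f w := by
  rcases lt_or_ge w m with hwm | hwm
  · rw [colF_lt hwm, colF_lt (lt_of_le_of_lt (clr_le w) hwm)]
    have := clr_lt hw
    omega
  · rw [colF_ge f (by omega) hw]
    rcases lt_or_ge (clr w) m with hcm | hcm
    · rw [if_pos hcm, colF_lt hcm]
      split
      · rename_i hex
        have := pick_mem hex
        simp only [Sset, Finset.mem_filter, Finset.mem_range] at this
        omega
      · split
        · next hc0 => rw [hc0]; omega
        · have : 1 ≤ clr w := by omega
          omega
    · rw [if_neg (by omega)]
      split <;> omega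

/-- The main existence lemma at the level of `ℕ`. -/
theorem exists_good_col (n m : ℕ) (hn : 1 ≤ n) (h2 : 2 ≤ m) (hmn : m ≤ n + 1)
    (hlog : ∀ w, 1 ≤ w → w < m → Nat.log 2 w + m ≤ n + 1) :
    ∃ col : ℕ → ℕ, (∀ x, col x ∈ Finset.Icc 1 m) ∧
      (∀ x y, natAdj x y → col x ≠ col y) ∧
      (∀ j ∈ Finset.Icc 1 m, ∃ x, x < 2 ^ n ∧ col x = j ∧
        ∀ j' ∈ Finset.Icc 1 m, j' ≠ j → ∃ y, y < 2 ^ n ∧ natAdj x y ∧ col y = j') := by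
  classical
  have hm2n : m ≤ 2 ^ n := le_trans hmn ((Nat.lt_two_pow_self (n := n)))
  -- choose injections
  have hex : ∀ v : ℕ, ∃ g : ℕ → ℕ, v < m →
      Set.InjOn g (Sset m v) ∧ ∀ s ∈ Sset m v, g s ∈ FreeSet n m v := by
    intro v
    by_cases hv : v < m
    · obtain ⟨g, hg1, hg2⟩ := exists_inj_SF (card_Sset_le h2 hmn hlog hv)
      exact ⟨g, fun _ => ⟨hg1, hg2⟩⟩
    · exact ⟨id, fun h => absurd h hv⟩
  choose f hf using hex
  refine ⟨colF m f, colF_mem f h2, ?_, ?_⟩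
  · -- properness
    intro x y hadj
    rcases hadj with ⟨hy0, rfl⟩ | ⟨hx0, rfl⟩
    · exact colF_proper f h2 hy0
    · exact (colF_proper f h2 hx0).symm
  · -- b-vertices
    intro j hj
    simp only [Finset.mem_Icc] at hj
    set v := j - 1 with hvdef
    have hvm : v < m := by omega
    refine ⟨v, by omega, by rw [colF_lt hvm]; omega, ?_⟩
    intro j' hj' hne
    simp only [Finset.mem_Icc] at hj'
    set s := j' - 1 with hsdef
    have hsm : s < m := by omega
    have hsv : s ≠ v := by omega
    by_cases hs : s ∈ Sset m v
    · -- free child takes care of it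
      set p := f v s with hp
      have hpF : p ∈ FreeSet n m v := (hf v hvm).2 s hs
      simp only [FreeSet, Finset.mem_filter, Finset.mem_range] at hpF
      obtain ⟨hpn, hvp, hmp⟩ := hpF
      refine ⟨v + 2 ^ p, ?_, ?_, ?_⟩
      · calc v + 2 ^ p < 2 ^ p + 2 ^ p := by omega
        _ = 2 ^ (p + 1) := by ring
        _ ≤ 2 ^ n := Nat.pow_le_pow_right (by norm_num) hpn
      · exact Or.inl ⟨by positivity, (clr_add_pow hvp).symm⟩
      · have hcy : clr (v + 2 ^ p) = v := clr_add_pow hvp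
        have hly : Nat.log 2 (v + 2 ^ p) = p := log_add_pow hvp
        rw [colF_ge f (by omega) (by positivity), hcy, hly, if_pos hvm]
        have hexx : ∃ s' ∈ Sset m v, f v s' = p := ⟨s, hs, rfl⟩
        rw [if_pos hexx, pick_spec (hf v hvm).1 hs hp.symm]
        omega
    · -- s is the parent or a `< m` child of v
      simp only [Sset, Finset.mem_filter, Finset.mem_range] at hs
      have : s = clr v ∨ clr s = v := by tauto
      rcases this with hsc | hsc
      · -- s is the parent of v
        have hv0 : v ≠ 0 := by
          intro h0
          rw [h0, clr_zero] at hsc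
          omega
        refine ⟨s, by omega, Or.inr ⟨hv0, hsc⟩, ?_⟩
        rw [colF_lt hsm]; omega
      · -- s is a child of v
        have hs0 : s ≠ 0 := by
          intro h0
          rw [h0, clr_zero] at hsc
          omega
        refine ⟨s, by omega, Or.inl ⟨hs0, hsc.symm⟩, ?_⟩
        rw [colF_lt hsm]; omega
/-! Stage 4: graph level -/

theorem bcol_mem (n : ℕ) (hn : 1 ≤ n) :
    ∃ c : atomV n → ℕ, IsBColoring (atomGraph n) (n + 1 - Nat.log 2 n) c := by
  set i := Nat.log 2 n with hi
  set m := n + 1 - i with hm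
  have hiltn : i < n := Nat.log_lt_of_lt_pow (by omega) ((Nat.lt_two_pow_self (n := n)))
  have h2 : 2 ≤ m := by omega
  have hmn : m ≤ n + 1 := by omega
  have hlog : ∀ w, 1 ≤ w → w < m → Nat.log 2 w + m ≤ n + 1 := by
    intro w h1 hw
    have : Nat.log 2 w ≤ i := Nat.log_mono_right (by omega)
    omega
  obtain ⟨col, hmem, hprop, hb⟩ := exists_good_col n m hn h2 hmn hlog
  refine ⟨fun v => col (toNatV n v), fun v => hmem _, ?_, ?_⟩
  · intro v w hadj
    exact hprop _ _ ((atom_adj_iff n v w).mp hadj)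
  · intro j hj
    obtain ⟨x, hx, hcx, hdom⟩ := hb j hj
    refine ⟨ofNatV n x, by dsimp only; rw [toNatV_ofNatV n x hx, hcx], ?_⟩
    intro j' hj' hne
    obtain ⟨y, hy, hadj, hcy⟩ := hdom j' hj' hne
    refine ⟨ofNatV n y, ?_, by dsimp only; rw [toNatV_ofNatV n y hy, hcy]⟩
    rw [atom_adj_iff n, toNatV_ofNatV n x hx, toNatV_ofNatV n y hy]
    exact hadj

/-- A finite superset of the nat-level neighbours of `x` among numbers `< 2^n`. -/
def nbrFin (n x : ℕ) : Finset ℕ :=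
  insert (clr x) (((Finset.range n).filter (fun p => x < 2 ^ p)).image (fun p => x + 2 ^ p))

lemma mem_nbrFin {n x y : ℕ} (hy : y < 2 ^ n) (h : natAdj x y) : y ∈ nbrFin n x := by
  rcases h with ⟨hy0, hx⟩ | ⟨hx0, hy'⟩
  · apply Finset.mem_insert_of_mem
    apply Finset.mem_image.mpr
    refine ⟨Nat.log 2 y, ?_, ?_⟩
    · simp only [Finset.mem_filter, Finset.mem_range]
      exact ⟨Nat.log_lt_of_lt_pow hy0 hy, hx ▸ clr_lt_pow hy0⟩
    · rw [hx]
      exact clr_add_eq hy0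
  · rw [hy']
    exact Finset.mem_insert_self _ _

lemma card_nbrFin_le {n x : ℕ} (hx0 : x ≠ 0) (hxn : x < 2 ^ n) :
    (nbrFin n x).card + Nat.log 2 x ≤ n := by
  have hlogn : Nat.log 2 x < n := Nat.log_lt_of_lt_pow hx0 hxn
  have hsub : ((Finset.range n).filter (fun p => x < 2 ^ p)) ⊆
      Finset.Ico (Nat.log 2 x + 1) n := by
    intro p hp
    simp only [Finset.mem_filter, Finset.mem_range] at hp
    simp only [Finset.mem_Ico]
    exact ⟨Nat.log_lt_of_lt_pow hx0 hp.2, hp.1⟩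
  have h1 : ((Finset.range n).filter (fun p => x < 2 ^ p)).card ≤ n - (Nat.log 2 x + 1) := by
    calc _ ≤ (Finset.Ico (Nat.log 2 x + 1) n).card := Finset.card_le_card hsub
    _ = n - (Nat.log 2 x + 1) := Nat.card_Ico _ _
  have h2 := Finset.card_insert_le (clr x)
    (((Finset.range n).filter (fun p => x < 2 ^ p)).image (fun p => x + 2 ^ p))
  have h3 := Finset.card_image_le
    (s := (Finset.range n).filter (fun p => x < 2 ^ p)) (f := fun p => x + 2 ^ p)
  unfold nbrFin
  omega

theorem bcol_upper {n K : ℕ} (hn : 1 ≤ n) (c : atomV n → ℕ)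
    (hc : IsBColoring (atomGraph n) K c) : K ≤ n + 2 - Nat.log 2 (n + 1) := by
  classical
  obtain ⟨hmem, hprop, hb⟩ := hc
  have hL1 : 1 ≤ Nat.log 2 (n + 1) :=
    (Nat.le_log_iff_pow_le (by norm_num) (by omega)).mpr (by omega)
  have hLn : Nat.log 2 (n + 1) ≤ n + 1 :=
    le_of_lt (Nat.log_lt_of_lt_pow (by omega) ((Nat.lt_two_pow_self (n := n + 1))))
  rcases le_or_gt K 1 with hK | hK
  · omega
  choose v hv hdom using hb
  -- each b-vertex has at least K-1 nat-level neighbours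
  have hA : ∀ j (hj : j ∈ Finset.Icc 1 K),
      K - 1 ≤ (nbrFin n (toNatV n (v j hj))).card := by
    intro j hj
    choose w hw1 hw2 using hdom j hj
    have := Finset.card_le_card_of_injOn
      (f := fun j' => if hj' : j' ∈ Finset.Icc 1 K ∧ j' ≠ j then
        toNatV n (w j' hj'.1 hj'.2) else 0)
      (s := (Finset.Icc 1 K).erase j) (t := nbrFin n (toNatV n (v j hj)))
      ?_ ?_
    · rwa [Finset.card_erase_of_mem hj, Nat.card_Icc, Nat.add_sub_cancel] at this
    · intro j' hj'
      have hj'' : j' ∈ Finset.Icc 1 K ∧ j' ≠ j :=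
        ⟨Finset.mem_of_mem_erase hj', Finset.ne_of_mem_erase hj'⟩
      dsimp only
      rw [dif_pos hj'']
      exact mem_nbrFin (toNatV_lt n _) ((atom_adj_iff n _ _).mp (hw1 j' hj''.1 hj''.2))
    · intro a ha b hb' hab
      simp only [Finset.mem_coe] at ha hb'
      have ha' : a ∈ Finset.Icc 1 K ∧ a ≠ j :=
        ⟨Finset.mem_of_mem_erase ha, Finset.ne_of_mem_erase ha⟩
      have hb'' : b ∈ Finset.Icc 1 K ∧ b ≠ j :=
        ⟨Finset.mem_of_mem_erase hb', Finset.ne_of_mem_erase hb'⟩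
      dsimp only at hab
      rw [dif_pos ha', dif_pos hb''] at hab
      have := toNatV_inj n _ _ hab
      have h1 := hw2 a ha'.1 ha'.2
      have h2 := hw2 b hb''.1 hb''.2
      rw [this] at h1
      rw [h1] at h2
      exact h2
  -- K ≤ n + 1
  have hKn : K ≤ n + 1 := by
    have h1 : (1 : ℕ) ∈ Finset.Icc 1 K := by simp; omega
    have h2 : (2 : ℕ) ∈ Finset.Icc 1 K := by simp; omega
    have hne : v 1 h1 ≠ v 2 h2 := by
      intro h
      have := hv 1 h1
      rw [h, hv 2 h2] at this
      omega
    have hne' : toNatV n (v 1 h1) ≠ toNatV n (v 2 h2) :=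
      fun h => hne (toNatV_inj n _ _ h)
    have key : ∀ j (hj : j ∈ Finset.Icc 1 K), toNatV n (v j hj) ≠ 0 → K ≤ n + 1 := by
      intro j hj hx0
      have := hA j hj
      have := card_nbrFin_le hx0 (toNatV_lt n (v j hj))
      omega
    rcases Nat.eq_zero_or_pos (toNatV n (v 1 h1)) with h | h
    · exact key 2 h2 (by omega)
    · exact key 1 h1 (by omega)
  -- each b-vertex is < 2^(n+2-K)
  have hC : ∀ j (hj : j ∈ Finset.Icc 1 K), toNatV n (v j hj) < 2 ^ (n + 2 - K) := by
    intro j hj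
    rcases Nat.eq_zero_or_pos (toNatV n (v j hj)) with h | h
    · rw [h]; positivity
    · have hx0 : toNatV n (v j hj) ≠ 0 := by omega
      have h1 := hA j hj
      have h2 := card_nbrFin_le hx0 (toNatV_lt n (v j hj))
      have h3 : Nat.log 2 (toNatV n (v j hj)) + 1 ≤ n + 2 - K := by omega
      calc toNatV n (v j hj) < 2 ^ (Nat.log 2 (toNatV n (v j hj)) + 1) :=
        Nat.lt_pow_succ_log_self (by norm_num) _
      _ ≤ 2 ^ (n + 2 - K) := Nat.pow_le_pow_right (by norm_num) h3
  -- hence K ≤ 2^(n+2-K)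
  have hD : K ≤ 2 ^ (n + 2 - K) := by
    have := Finset.card_le_card_of_injOn
      (f := fun j => if hj : j ∈ Finset.Icc 1 K then toNatV n (v j hj) else 0)
      (s := Finset.Icc 1 K) (t := Finset.range (2 ^ (n + 2 - K))) ?_ ?_
    · rwa [Nat.card_Icc, Nat.add_sub_cancel, Finset.card_range] at this
    · intro j hj
      dsimp only
      rw [dif_pos (Finset.mem_coe.mp hj)]
      exact Finset.mem_range.mpr (hC j hj)
    · intro a ha b hb' hab
      simp only [Finset.mem_coe] at ha hb'
      dsimp only at hab
      rw [dif_pos ha, dif_pos hb'] at hab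
      have := toNatV_inj n _ _ hab
      have h1 := hv a ha
      rw [this, hv b hb'] at h1
      omega
  -- final arithmetic
  by_contra hcon
  push_neg at hcon
  set L := Nat.log 2 (n + 1) with hLdef
  have hKL : n + 3 - L ≤ K := by omega
  have hE : n + 2 - K ≤ L - 1 := by omega
  have hpow1 : 2 ^ (n + 2 - K) ≤ 2 ^ (L - 1) := Nat.pow_le_pow_right (by norm_num) hE
  have hpow2 : 2 ^ L ≤ n + 1 := Nat.pow_log_le_self 2 (by omega)
  have hpow3 : 2 * 2 ^ (L - 1) = 2 ^ L := by
    rw [← pow_succ']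
    congr 1
    omega
  have hpow4 : L - 1 < 2 ^ (L - 1) := Nat.lt_two_pow_self
  omega

/-- for `k ≥ 2`, `k - ⌊log₂ (k-1)⌋ ≤ b(T_k) ≤ k - ⌊log₂ k⌋ + 1`. -/

theorem bChromatic_treeAtom_bounds (k : ℕ) (hk : 2 ≤ k) :
    k - Nat.log 2 (k - 1) ≤ bChromatic (treeAtom k) ∧
      bChromatic (treeAtom k) ≤ k - Nat.log 2 k + 1 := by
  have hn : 1 ≤ k - 1 := by omega
  have hbc : bChromatic (treeAtom k) = bChromatic (atomGraph (k - 1)) := rfl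
  have hub : ∀ K ∈ {K | ∃ c : atomV (k - 1) → ℕ, IsBColoring (atomGraph (k - 1)) K c},
      K ≤ (k - 1) + 2 - Nat.log 2 ((k - 1) + 1) := by
    rintro K ⟨c, hc⟩
    exact bcol_upper hn c hc
  have hBdd : BddAbove {K | ∃ c : atomV (k - 1) → ℕ, IsBColoring (atomGraph (k - 1)) K c} :=
    ⟨(k - 1) + 2 - Nat.log 2 ((k - 1) + 1), hub⟩
  have hmem : ((k - 1) + 1 - Nat.log 2 (k - 1)) ∈
      {K | ∃ c : atomV (k - 1) → ℕ, IsBColoring (atomGraph (k - 1)) K c} :=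
    bcol_mem (k - 1) hn
  have hlow : (k - 1) + 1 - Nat.log 2 (k - 1) ≤ bChromatic (atomGraph (k - 1)) :=
    le_csSup hBdd hmem
  have hhigh : bChromatic (atomGraph (k - 1)) ≤ (k - 1) + 2 - Nat.log 2 ((k - 1) + 1) :=
    csSup_le' hub
  rw [show (k - 1) + 1 = k from by omega] at hhigh
  have hlogk : Nat.log 2 k ≤ k := le_of_lt (Nat.log_lt_of_lt_pow (by omega) ((Nat.lt_two_pow_self (n := k))))
  have hlogk1 : Nat.log 2 (k - 1) ≤ k - 1 :=
    le_of_lt (Nat.log_lt_of_lt_pow (by omega) ((Nat.lt_two_pow_self (n := k - 1))))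
  rw [hbc]
  omega
end
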